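/- Let P be an irreducible stochastic matrix on a finite set S with invariant distribution π, and suppose there exists a state s with π_s > 1/m for some positive integer m. Then for every coupling μ ∈ L_P, the number of coalescence classes k(μ) is strictly less than m. -/

import Mathlib

open Finset MeasureTheory

/-- A probability measure on the functions `S → S`, consistent with `P`. -/
def IsCoupling {S : Type*} [Fintype S] [DecidableEq S] (μ : (S → S) → ℝ)
    (P : Matrix S S ℝ) : Prop :=
  (∀ f, 0 ≤ μ f) ∧ (∑ f, μ f = 1) ∧
    ∀ i j, (∑ f : S → S, if f i = j then μ f else 0) = P i j

/-- `comps f t = f_t ∘ ⋯ ∘ f_1` (indexed from `0`). -/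
def comps {S : Type*} (f : ℕ → S → S) : ℕ → S → S
  | 0 => id
  | t + 1 => f t ∘ comps f t

set_option linter.unusedSectionVars false
set_option maxHeartbeats 1000000


set_option linter.unusedSectionVars false
section MatrixPart
variable {S : Type*} [Fintype S] [DecidableEq S] [Nonempty S]

lemma pow_entry_nonneg (P : Matrix S S ℝ) (hnn : ∀ i j, 0 ≤ P i j) :
    ∀ (n : ℕ) (i j : S), 0 ≤ (P ^ n) i j := by
  intro n
  induction n with
  | zero => intro i j; rw [pow_zero]; by_cases h : i = j <;>
      simp [Matrix.one_apply, h]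
  | succ n ih =>
      intro i j
      rw [pow_succ, Matrix.mul_apply]
      exact Finset.sum_nonneg fun k _ => mul_nonneg (ih i k) (hnn k j)

lemma pow_row_sum (P : Matrix S S ℝ) (hrow : ∀ i, ∑ j, P i j = 1) :
    ∀ (n : ℕ) (i : S), ∑ j, (P ^ n) i j = 1 := by
  intro n
  induction n with
  | zero => intro i; simp [Matrix.one_apply]
  | succ n ih =>
      intro i
      rw [pow_succ]
      simp only [Matrix.mul_apply]
      rw [Finset.sum_comm]
      calc ∑ k, ∑ j, (P ^ n) i k * P k j = ∑ k, (P ^ n) i k * ∑ j, P k j := by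
            simp [Finset.mul_sum]
        _ = 1 := by simp [hrow]; exact ih i

lemma pow_entry_le_one (P : Matrix S S ℝ) (hnn : ∀ i j, 0 ≤ P i j)
    (hrow : ∀ i, ∑ j, P i j = 1) (n : ℕ) (i j : S) : (P ^ n) i j ≤ 1 := by
  calc (P ^ n) i j ≤ ∑ k, (P ^ n) i k :=
        Finset.single_le_sum (fun k _ => pow_entry_nonneg P hnn n i k) (mem_univ j)
    _ = 1 := pow_row_sum P hrow n i

lemma invariant_pow (P : Matrix S S ℝ) (w : S → ℝ)
    (hw : ∀ j, ∑ i, w i * P i j = w j) :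
    ∀ (n : ℕ) (j : S), ∑ i, w i * (P ^ n) i j = w j := by
  intro n
  induction n with
  | zero => intro j; simp [Matrix.one_apply]
  | succ n ih =>
      intro j
      rw [pow_succ]
      simp only [Matrix.mul_apply]
      calc ∑ i, w i * ∑ k, (P ^ n) i k * P k j
          = ∑ i, ∑ k, w i * (P ^ n) i k * P k j := by
            simp [Finset.mul_sum, mul_assoc]
        _ = ∑ k, ∑ i, w i * (P ^ n) i k * P k j := Finset.sum_comm
        _ = ∑ k, (∑ i, w i * (P ^ n) i k) * P k j := by simp [Finset.sum_mul]
        _ = ∑ k, w k * P k j := by simp [ih]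
        _ = w j := hw j

lemma invariant_unique (P : Matrix S S ℝ) (hnn : ∀ i j, 0 ≤ P i j)
    (hirr : ∀ i j, ∃ n : ℕ, 0 < n ∧ 0 < (P ^ n) i j)
    (π : S → ℝ) (hπpos : ∀ i, 0 < π i)
    (hπinv : ∀ j, ∑ i, π i * P i j = π j)
    (v : S → ℝ) (hv : ∀ j, ∑ i, v i * P i j = v j) (hvsum : ∑ i, v i = 0) :
    v = 0 := by
  obtain ⟨i0, -, hi0⟩ := Finset.exists_min_image Finset.univ (fun i => v i / π i)
    Finset.univ_nonempty
  set c : ℝ := v i0 / π i0 with hc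
  set w : S → ℝ := fun i => v i - c * π i with hw
  have hwnn : ∀ i, 0 ≤ w i := by
    intro i
    have h1 : c ≤ v i / π i := hi0 i (mem_univ i)
    have h2 : c * π i ≤ v i := (le_div_iff₀ (hπpos i)).mp h1
    simpa [hw] using sub_nonneg.mpr h2
  have hwi0 : w i0 = 0 := by
    simp [hw, hc, div_mul_cancel₀ _ (ne_of_gt (hπpos i0))]
  have hwinv : ∀ j, ∑ i, w i * P i j = w j := by
    intro j
    simp only [hw, sub_mul, Finset.sum_sub_distrib, hv j]
    have : ∑ i, c * π i * P i j = c * π j := by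
      rw [← hπinv j, Finset.mul_sum]; congr 1; ext i; ring
    rw [this]
  have hwzero : ∀ j, w j = 0 := by
    intro j
    by_contra hj
    have hwj : 0 < w j := lt_of_le_of_ne (hwnn j) (Ne.symm hj)
    obtain ⟨n, -, hn⟩ := hirr j i0
    have : 0 < ∑ i, w i * (P ^ n) i i0 := by
      have hterm : 0 < w j * (P ^ n) j i0 := mul_pos hwj hn
      have : ∀ i ∈ Finset.univ, 0 ≤ w i * (P ^ n) i i0 :=
        fun i _ => mul_nonneg (hwnn i) (pow_entry_nonneg P hnn n i i0)
      calc (0:ℝ) < w j * (P ^ n) j i0 := hterm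
        _ ≤ ∑ i, w i * (P ^ n) i i0 := Finset.single_le_sum this (mem_univ j)
    rw [invariant_pow P w hwinv n i0, hwi0] at this
    exact lt_irrefl 0 this
  have hveq : ∀ i, v i = c * π i := by
    intro i; have := hwzero i; simp [hw] at this; linarith
  have hc0 : c = 0 := by
    have : ∑ i, v i = c * ∑ i, π i := by
      rw [Finset.mul_sum]; exact Finset.sum_congr rfl fun i _ => hveq i
    by_contra hcne
    have hπs : 0 < ∑ i, π i := Finset.sum_pos (fun i _ => hπpos i) Finset.univ_nonempty
    rw [hvsum] at this
    have := this.symm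
    rcases mul_eq_zero.mp this with h | h
    · exact hcne h
    · linarith
  funext i
  simp [hveq i, hc0]

lemma exists_good_time (P : Matrix S S ℝ)
    (hnn : ∀ i j, 0 ≤ P i j) (hrow : ∀ i, ∑ j, P i j = 1)
    (hirr : ∀ i j, ∃ n : ℕ, 0 < n ∧ 0 < (P ^ n) i j)
    (π : S → ℝ) (hπpos : ∀ i, 0 < π i) (hπsum : ∑ i, π i = 1)
    (hπinv : ∀ j, ∑ i, π i * P i j = π j)
    (m : ℕ) (s : S) (hms : 1 < (m : ℝ) * π s) :
    ∀ x : Fin m → S, ∃ t : ℕ, 1 < ∑ a, (P ^ t) (x a) s := by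
  classical
  set Pim : Matrix S S ℝ := Matrix.of (fun _ j => π j) with hPim
  set B : Matrix S S ℝ := 1 - P + Pim with hB
  -- B has nonzero determinant
  have hdet : B.det ≠ 0 := by
    intro hd
    obtain ⟨v, hv0, hvB⟩ := Matrix.exists_vecMul_eq_zero_iff.mpr hd
    have hvB' : ∀ j, v j - (∑ i, v i * P i j) + (∑ i, v i) * π j = 0 := by
      intro j
      have := congrFun hvB j
      simp only [Matrix.vecMul, dotProduct, hB, hPim] at this
      simp only [Matrix.add_apply, Matrix.sub_apply, Matrix.of_apply, Pi.zero_apply] at this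
      rw [← this]
      simp only [mul_sub, mul_add, Finset.sum_sub_distrib, Finset.sum_add_distrib]
      rw [Finset.sum_mul]
      congr 1
      congr 1
      simp [Matrix.one_apply, mul_ite, Finset.sum_ite_eq' Finset.univ j v]
    have hsv : ∑ i, v i = 0 := by
      have := Finset.sum_congr rfl (fun j (_ : j ∈ Finset.univ) => hvB' j)
      rw [Finset.sum_const_zero] at this
      simp only [Finset.sum_add_distrib, Finset.sum_sub_distrib] at this
      rw [Finset.sum_comm] at this
      have h1 : ∑ i, ∑ j, v i * P i j = ∑ i, v i := by
        simp [← Finset.mul_sum, hrow]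
      have h2 : ∑ j, (∑ i, v i) * π j = ∑ i, v i := by
        rw [← Finset.mul_sum, hπsum, mul_one]
      rw [h1, h2] at this
      linarith
    have hvinv : ∀ j, ∑ i, v i * P i j = v j := by
      intro j
      have := hvB' j
      rw [hsv] at this
      linarith
    exact hv0 (invariant_unique P hnn hirr π hπpos hπinv v hvinv hsv)
  have hu : IsUnit B.det := isUnit_iff_ne_zero.mpr hdet
  set Z : Matrix S S ℝ := B⁻¹ with hZ
  have hBZ : B * Z = 1 := Matrix.mul_nonsing_inv B hu
  -- Pim * B = Pim
  have hPimP : Pim * P = Pim := by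
    ext i j
    simp only [Matrix.mul_apply, hPim, Matrix.of_apply]
    exact hπinv j
  have hPimPim : Pim * Pim = Pim := by
    ext i j
    simp only [Matrix.mul_apply, hPim, Matrix.of_apply]
    rw [← Finset.sum_mul, hπsum, one_mul]
  have hPimB : Pim * B = Pim := by
    rw [hB, mul_add, mul_sub, hPimP, hPimPim, mul_one]
    abel
  have hPimZ : Pim * Z = Pim := by
    calc Pim * Z = (Pim * B) * Z := by rw [hPimB]
      _ = Pim * (B * Z) := by rw [mul_assoc]
      _ = Pim := by rw [hBZ, mul_one]
  -- P^t * Pim = Pim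
  have hPtPi : ∀ t : ℕ, (P ^ t) * Pim = Pim := by
    intro t
    ext i j
    simp only [Matrix.mul_apply, hPim, Matrix.of_apply]
    rw [← Finset.sum_mul, pow_row_sum P hrow, one_mul]
  -- main identity
  have hmain : ∀ T : ℕ, (∑ t ∈ Finset.range T, P ^ t) =
      (1 - P ^ T) * Z + (T : ℕ) • Pim := by
    intro T
    set M : Matrix S S ℝ := ∑ t ∈ Finset.range T, P ^ t with hM
    have hMP : M * P = M - 1 + P ^ T := by
      rw [hM, Finset.sum_mul]
      have h1 : ∀ t, (P ^ t) * P = P ^ (t + 1) := fun t => (pow_succ P t).symm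
      rw [Finset.sum_congr rfl (fun t _ => h1 t)]
      have h2 : ∑ t ∈ Finset.range T, P ^ (t + 1) =
          (∑ t ∈ Finset.range (T + 1), P ^ t) - P ^ 0 := by
        rw [Finset.sum_range_succ' (fun t => P ^ t) T]
        simp
      rw [h2, Finset.sum_range_succ]
      simp only [pow_zero]
      abel
    have hMPim : M * Pim = (T : ℕ) • Pim := by
      rw [hM, Finset.sum_mul, Finset.sum_congr rfl (fun t _ => hPtPi t)]
      simp
    have hMB : M * B = (1 - P ^ T) + (T : ℕ) • Pim := by
      rw [hB, mul_add, mul_sub, mul_one, hMP, hMPim]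
      abel
    calc M = M * (B * Z) := by rw [hBZ, mul_one]
      _ = (M * B) * Z := by rw [mul_assoc]
      _ = ((1 - P ^ T) + (T : ℕ) • Pim) * Z := by rw [hMB]
      _ = (1 - P ^ T) * Z + (T : ℕ) • Pim := by
          rw [add_mul, smul_mul_assoc, hPimZ]
  -- entrywise bound
  set C : ℝ := 2 * ∑ k, |Z k s| with hC
  have hC0 : 0 ≤ C := by positivity
  have hbound : ∀ (T : ℕ) (i : S), |((1 - P ^ T) * Z) i s| ≤ C := by
    intro T i
    rw [Matrix.mul_apply]
    calc |∑ k, (1 - P ^ T) i k * Z k s| ≤ ∑ k, |(1 - P ^ T) i k * Z k s| :=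
          Finset.abs_sum_le_sum_abs _ _
      _ ≤ ∑ k, 2 * |Z k s| := by
          apply Finset.sum_le_sum
          intro k _
          rw [abs_mul]
          apply mul_le_mul_of_nonneg_right _ (abs_nonneg _)
          simp only [Matrix.sub_apply, Matrix.one_apply]
          calc |(if i = k then (1:ℝ) else 0) - (P ^ T) i k| ≤
                |(if i = k then (1:ℝ) else 0)| + |(P ^ T) i k| := abs_sub _ _
            _ ≤ 1 + 1 := by
                gcongr
                · split <;> simp
                · rw [abs_of_nonneg (pow_entry_nonneg P hnn T i k)]
                  exact pow_entry_le_one P hnn hrow T i k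
            _ = 2 := by norm_num
      _ = C := by rw [hC, Finset.mul_sum]
  intro x
  -- choose T
  have hpos : 0 < (m : ℝ) * π s - 1 := by linarith
  obtain ⟨T, hT⟩ := exists_nat_gt ((m : ℝ) * C / ((m : ℝ) * π s - 1))
  have hTbig : (m : ℝ) * C < T * ((m : ℝ) * π s - 1) := by
    rw [div_lt_iff₀ hpos] at hT
    linarith
  -- sum bound
  have hsum : (T : ℝ) < ∑ t ∈ Finset.range T, ∑ a, (P ^ t) (x a) s := by
    have hswap : ∑ t ∈ Finset.range T, ∑ a, (P ^ t) (x a) s =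
        ∑ a, (∑ t ∈ Finset.range T, P ^ t) (x a) s := by
      rw [Finset.sum_comm]
      congr 1; ext a
      simp [Matrix.sum_apply]
    rw [hswap]
    have hentry : ∀ a : Fin m, (T : ℝ) * π s - C ≤ (∑ t ∈ Finset.range T, P ^ t) (x a) s := by
      intro a
      rw [hmain T]
      have h2 : (((T:ℕ) • Pim) : Matrix S S ℝ) (x a) s = (T:ℝ) * π s := by
        simp [hPim, Matrix.smul_apply]
      simp only [Matrix.add_apply]
      rw [h2]
      have := hbound T (x a)
      have h1 : -C ≤ ((1 - P ^ T) * Z) (x a) s := neg_le_of_abs_le this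
      linarith
    calc (T : ℝ) < T * ((m : ℝ) * π s) - m * C := by linarith
      _ = ∑ _a : Fin m, ((T : ℝ) * π s - C) := by
          rw [Finset.sum_const]
          simp [Finset.card_univ]
          ring
      _ ≤ ∑ a, (∑ t ∈ Finset.range T, P ^ t) (x a) s :=
          Finset.sum_le_sum fun a _ => hentry a
  have : ∑ t ∈ Finset.range T, (1:ℝ) < ∑ t ∈ Finset.range T, ∑ a, (P ^ t) (x a) s := by
    simpa using hsum
  obtain ⟨t, -, ht⟩ := Finset.exists_lt_of_sum_lt this
  exact ⟨t, ht⟩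

end MatrixPart


section Comb
variable {S : Type*} [Fintype S] [DecidableEq S] {m : ℕ}

/-- distribution of the m coupled chains after n steps -/
def nufun (μ : (S → S) → ℝ) : ℕ → (Fin m → S) → (Fin m → S) → ℝ
  | 0, x, y => if x = y then 1 else 0
  | n + 1, x, y => ∑ f : S → S, μ f * nufun μ n (f ∘ x) y

/-- probability that the chains are pairwise distinct at all times ≤ n -/
def Rfun (μ : (S → S) → ℝ) : ℕ → (Fin m → S) → ℝ
  | 0, x => if Function.Injective x then 1 else 0
  | n + 1, x => if Function.Injective x then ∑ f : S → S, μ f * Rfun μ n (f ∘ x) else 0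

/-- joint: distinct at all times ≤ n and position y at time n -/
def rhofun (μ : (S → S) → ℝ) : ℕ → (Fin m → S) → (Fin m → S) → ℝ
  | 0, x, y => if Function.Injective x ∧ x = y then 1 else 0
  | n + 1, x, y => if Function.Injective x then ∑ f : S → S, μ f * rhofun μ n (f ∘ x) y else 0

/-- probability that the chains are pairwise distinct at time n -/
def Dfun (μ : (S → S) → ℝ) (n : ℕ) (x : Fin m → S) : ℝ :=
  ∑ y : Fin m → S, if Function.Injective y then nufun μ n x y else 0

variable {μ : (S → S) → ℝ}

lemma nufun_nonneg (hμ0 : ∀ f, 0 ≤ μ f) (n : ℕ) : ∀ (x y : Fin m → S), 0 ≤ nufun μ n x y := by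
  induction n with
  | zero => intro x y; rw [nufun]; split <;> norm_num
  | succ n ih =>
      intro x y
      rw [nufun]
      exact Finset.sum_nonneg fun f _ => mul_nonneg (hμ0 f) (ih _ y)

lemma nufun_sum (hμ1 : ∑ f, μ f = 1) (n : ℕ) : ∀ x : Fin m → S, ∑ y, nufun μ n x y = 1 := by
  induction n with
  | zero =>
      intro x
      simp only [nufun]
      rw [Finset.sum_ite_eq Finset.univ x (fun _ => (1:ℝ))]
      simp
  | succ n ih =>
      intro x
      simp only [nufun]
      rw [Finset.sum_comm]
      calc ∑ f : S → S, ∑ y, μ f * nufun μ n (f ∘ x) y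
          = ∑ f : S → S, μ f * ∑ y, nufun μ n (f ∘ x) y := by
            simp [Finset.mul_sum]
        _ = 1 := by simp [fun f => ih (f ∘ x), hμ1]

lemma nufun_marginal (P : Matrix S S ℝ)
    (hμP : ∀ i j, (∑ f : S → S, if f i = j then μ f else 0) = P i j) (n : ℕ) :
    ∀ (x : Fin m → S) (a : Fin m) (j : S),
      (∑ y : Fin m → S, if y a = j then nufun μ n x y else 0) = (P ^ n) (x a) j := by
  induction n with
  | zero =>
      intro x a j
      simp only [nufun]
      have h1 : ∀ y : Fin m → S, (if y a = j then (if x = y then (1:ℝ) else 0) else 0)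
          = if x = y then (if y a = j then (1:ℝ) else 0) else 0 := by
        intro y
        by_cases h1 : y a = j <;> by_cases h2 : x = y <;> simp [h1, h2]
      rw [Finset.sum_congr rfl (fun y _ => h1 y),
        Finset.sum_ite_eq Finset.univ x (fun y => if y a = j then (1:ℝ) else 0)]
      simp [pow_zero, Matrix.one_apply]
  | succ n ih =>
      intro x a j
      simp only [nufun]
      have h1 : ∀ y : Fin m → S, (if y a = j then ∑ f : S → S, μ f * nufun μ n (f ∘ x) y else 0)
          = ∑ f : S → S, (if y a = j then μ f * nufun μ n (f ∘ x) y else 0) := by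
        intro y; split <;> simp
      rw [Finset.sum_congr rfl (fun y _ => h1 y), Finset.sum_comm]
      have h2 : ∀ f : S → S, ∑ y : Fin m → S, (if y a = j then μ f * nufun μ n (f ∘ x) y else 0)
          = μ f * (P ^ n) (f (x a)) j := by
        intro f
        have hih := ih (f ∘ x) a j
        simp only [Function.comp_apply] at hih
        rw [← hih, Finset.mul_sum]
        congr 1; ext y
        split <;> simp
      rw [Finset.sum_congr rfl (fun f _ => h2 f)]
      have h3 : ∀ f : S → S, μ f * (P ^ n) (f (x a)) j
          = ∑ i : S, if f (x a) = i then μ f * (P ^ n) i j else 0 := by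
        intro f
        rw [Finset.sum_ite_eq Finset.univ (f (x a)) (fun i => μ f * (P ^ n) i j)]
        simp
      rw [Finset.sum_congr rfl (fun f _ => h3 f), Finset.sum_comm]
      have h4 : ∀ i : S, ∑ f : S → S, (if f (x a) = i then μ f * (P ^ n) i j else 0)
          = P (x a) i * (P ^ n) i j := by
        intro i
        rw [← hμP (x a) i, Finset.sum_mul]
        congr 1; ext f
        split <;> simp
      rw [Finset.sum_congr rfl (fun i _ => h4 i), pow_succ' P n, Matrix.mul_apply]

lemma Dfun_nonneg (hμ0 : ∀ f, 0 ≤ μ f) (n : ℕ) (x : Fin m → S) : 0 ≤ Dfun μ n x := by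
  apply Finset.sum_nonneg
  intro y _
  split
  · exact nufun_nonneg hμ0 n x y
  · exact le_refl 0

lemma Dfun_succ (n : ℕ) (x : Fin m → S) :
    Dfun μ (n + 1) x = ∑ f : S → S, μ f * Dfun μ n (f ∘ x) := by
  unfold Dfun
  simp only [nufun]
  have h1 : ∀ y : Fin m → S,
      (if Function.Injective y then ∑ f : S → S, μ f * nufun μ n (f ∘ x) y else 0)
      = ∑ f : S → S, (if Function.Injective y then μ f * nufun μ n (f ∘ x) y else 0) := by
    intro y; split <;> simp
  rw [Finset.sum_congr rfl (fun y _ => h1 y), Finset.sum_comm]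
  congr 1; ext f
  rw [Finset.mul_sum]
  congr 1; ext y
  split <;> simp

lemma occupation_bound (hμ0 : ∀ f, 0 ≤ μ f) (hμ1 : ∑ f, μ f = 1)
    (P : Matrix S S ℝ)
    (hμP : ∀ i j, (∑ f : S → S, if f i = j then μ f else 0) = P i j)
    (n : ℕ) (x : Fin m → S) (s : S) :
    ∑ a : Fin m, (P ^ n) (x a) s ≤ Dfun μ n x + m * (1 - Dfun μ n x) := by
  have hmar : ∀ a : Fin m, (P ^ n) (x a) s
      = ∑ y : Fin m → S, (if y a = s then nufun μ n x y else 0) :=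
    fun a => (nufun_marginal P hμP n x a s).symm
  rw [Finset.sum_congr rfl (fun a _ => hmar a), Finset.sum_comm]
  have hterm : ∀ y : Fin m → S, ∑ a : Fin m, (if y a = s then nufun μ n x y else 0)
      ≤ (if Function.Injective y then nufun μ n x y else 0)
        + m * (nufun μ n x y - (if Function.Injective y then nufun μ n x y else 0)) := by
    intro y
    have hN : ∑ a : Fin m, (if y a = s then nufun μ n x y else 0)
        = nufun μ n x y * ∑ a : Fin m, (if y a = s then (1:ℝ) else 0) := by
      rw [Finset.mul_sum]
      congr 1; ext a; split <;> simp
    rw [hN]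
    by_cases hy : Function.Injective y
    · have hle : ∑ a : Fin m, (if y a = s then (1:ℝ) else 0) ≤ 1 := by
        rw [Finset.sum_boole]
        rw [Nat.cast_le_one]
        apply Finset.card_le_one.mpr
        intro a ha b hb
        simp only [Finset.mem_filter] at ha hb
        exact hy (ha.2.trans hb.2.symm)
      simp only [hy, if_pos]
      have h0 := nufun_nonneg hμ0 n x y
      nlinarith
    · have hle : ∑ a : Fin m, (if y a = s then (1:ℝ) else 0) ≤ m := by
        calc ∑ a : Fin m, (if y a = s then (1:ℝ) else 0) ≤ ∑ _a : Fin m, (1:ℝ) := by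
              apply Finset.sum_le_sum; intro a _; split <;> norm_num
          _ = m := by simp
      simp only [hy, if_neg, not_false_iff]
      have h0 := nufun_nonneg hμ0 n x y
      nlinarith
  calc ∑ y : Fin m → S, ∑ a : Fin m, (if y a = s then nufun μ n x y else 0)
      ≤ ∑ y : Fin m → S, ((if Function.Injective y then nufun μ n x y else 0)
        + m * (nufun μ n x y - (if Function.Injective y then nufun μ n x y else 0))) :=
        Finset.sum_le_sum fun y _ => hterm y
    _ = Dfun μ n x + m * (1 - Dfun μ n x) := by
        rw [Finset.sum_add_distrib]
        unfold Dfun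
        congr 1
        rw [← Finset.mul_sum, Finset.sum_sub_distrib, nufun_sum hμ1 n x]

lemma Dfun_lt_one (hμ0 : ∀ f, 0 ≤ μ f) (hμ1 : ∑ f, μ f = 1)
    (P : Matrix S S ℝ)
    (hμP : ∀ i j, (∑ f : S → S, if f i = j then μ f else 0) = P i j)
    (hm2 : 2 ≤ m) (n : ℕ) (x : Fin m → S) (s : S)
    (h : 1 < ∑ a : Fin m, (P ^ n) (x a) s) : Dfun μ n x < 1 := by
  have hb := occupation_bound hμ0 hμ1 P hμP n x s
  have hm2' : (2:ℝ) ≤ m := by exact_mod_cast hm2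
  nlinarith [Dfun_nonneg hμ0 n x]

lemma Rfun_nonneg (hμ0 : ∀ f, 0 ≤ μ f) (n : ℕ) : ∀ x : Fin m → S, 0 ≤ Rfun μ n x := by
  induction n with
  | zero => intro x; rw [Rfun]; split <;> norm_num
  | succ n ih =>
      intro x
      rw [Rfun]
      split
      · exact Finset.sum_nonneg fun f _ => mul_nonneg (hμ0 f) (ih _)
      · exact le_refl 0

lemma Rfun_le_one (hμ0 : ∀ f, 0 ≤ μ f) (hμ1 : ∑ f, μ f = 1) (n : ℕ) :
    ∀ x : Fin m → S, Rfun μ n x ≤ 1 := by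
  induction n with
  | zero => intro x; rw [Rfun]; split <;> norm_num
  | succ n ih =>
      intro x
      rw [Rfun]
      split
      · have h3 : ∀ f ∈ Finset.univ, μ f * Rfun μ n (f ∘ x) ≤ μ f := fun f _ =>
          mul_le_of_le_one_right (hμ0 f) (ih _)
        exact le_trans (Finset.sum_le_sum h3) (le_of_eq hμ1)
      · norm_num

lemma Dfun_zero (x : Fin m → S) :
    Dfun μ 0 x = if Function.Injective x then 1 else 0 := by
  unfold Dfun
  have h1 : ∀ y : Fin m → S, (if Function.Injective y then nufun μ 0 x y else 0)
      = if x = y then (if Function.Injective y then (1:ℝ) else 0) else 0 := by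
    intro y
    simp only [nufun]
    by_cases h2 : x = y
    · subst h2; simp
    · simp [h2]
  rw [Finset.sum_congr rfl (fun y _ => h1 y),
    Finset.sum_ite_eq Finset.univ x (fun y => if Function.Injective y then (1:ℝ) else 0)]
  simp

lemma Rfun_le_Dfun (hμ0 : ∀ f, 0 ≤ μ f) (hμ1 : ∑ f, μ f = 1) (n : ℕ) :
    ∀ (t : ℕ), t ≤ n → ∀ x : Fin m → S, Rfun μ n x ≤ Dfun μ t x := by
  induction n with
  | zero =>
      intro t ht x
      interval_cases t
      rw [Rfun, Dfun_zero]
  | succ n ih =>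
      intro t ht x
      match t with
      | 0 =>
          have hR : Rfun μ (n + 1) x ≤ (if Function.Injective x then (1:ℝ) else 0) := by
            rw [Rfun]
            split
            · have h3 : ∀ f ∈ Finset.univ, μ f * Rfun μ n (f ∘ x) ≤ μ f := fun f _ =>
                mul_le_of_le_one_right (hμ0 f) (Rfun_le_one hμ0 hμ1 n _)
              exact le_trans (Finset.sum_le_sum h3) (le_of_eq hμ1)
            · exact le_refl 0
          rw [Dfun_zero]
          exact hR
      | t + 1 =>
          rw [Rfun, Dfun_succ]
          have h2 : ∑ f : S → S, μ f * Rfun μ n (f ∘ x) ≤ ∑ f : S → S, μ f * Dfun μ t (f ∘ x) := by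
            apply Finset.sum_le_sum
            intro f _
            exact mul_le_mul_of_nonneg_left (ih t (Nat.succ_le_succ_iff.mp ht) (f ∘ x)) (hμ0 f)
          split
          · exact h2
          · exact le_trans (le_of_eq rfl)
              (Finset.sum_nonneg fun f _ => mul_nonneg (hμ0 f) (Dfun_nonneg hμ0 t (f ∘ x)))

lemma rhofun_nonneg (hμ0 : ∀ f, 0 ≤ μ f) (n : ℕ) :
    ∀ (x y : Fin m → S), 0 ≤ rhofun μ n x y := by
  induction n with
  | zero => intro x y; rw [rhofun]; split <;> norm_num
  | succ n ih =>
      intro x y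
      rw [rhofun]
      split
      · exact Finset.sum_nonneg fun f _ => mul_nonneg (hμ0 f) (ih _ y)
      · exact le_refl 0

lemma rhofun_sum (n : ℕ) : ∀ x : Fin m → S, ∑ y, rhofun μ n x y = Rfun μ n x := by
  induction n with
  | zero =>
      intro x
      simp only [rhofun, Rfun]
      by_cases hx : Function.Injective x
      · simp only [hx, true_and]
        rw [Finset.sum_ite_eq Finset.univ x (fun _ => (1:ℝ))]
        simp [hx]
      · simp [hx]
  | succ n ih =>
      intro x
      simp only [rhofun, Rfun]
      by_cases hx : Function.Injective x
      · simp only [hx, if_true]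
        rw [Finset.sum_comm]
        calc ∑ f : S → S, ∑ y, μ f * rhofun μ n (f ∘ x) y
            = ∑ f : S → S, μ f * ∑ y, rhofun μ n (f ∘ x) y := by
              simp [Finset.mul_sum]
          _ = ∑ f : S → S, μ f * Rfun μ n (f ∘ x) := by
              simp only [fun f => ih (f ∘ x)]
      · simp [hx]

lemma Rfun_add (a : ℕ) : ∀ (b : ℕ) (x : Fin m → S),
    Rfun μ (a + b) x = ∑ y, rhofun μ a x y * Rfun μ b y := by
  induction a with
  | zero =>
      intro b x
      simp only [rhofun, Nat.zero_add]
      by_cases hx : Function.Injective x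
      · simp only [hx, true_and]
        have h1 : ∀ y : Fin m → S, (if x = y then (1:ℝ) else 0) * Rfun μ b y
            = if x = y then Rfun μ b y else 0 := by
          intro y; split <;> simp
        rw [Finset.sum_congr rfl (fun y _ => h1 y),
          Finset.sum_ite_eq Finset.univ x (fun y => Rfun μ b y)]
        simp
      · have hR0 : ∀ n, Rfun μ n x = (0:ℝ) := by
          intro n; cases n <;> · rw [Rfun]; simp [hx]
        rw [hR0 b]
        simp [hx]
  | succ a ih =>
      intro b x
      have hadd : a + 1 + b = (a + b) + 1 := by omega
      rw [hadd]
      simp only [Rfun, rhofun]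
      by_cases hx : Function.Injective x
      · simp only [hx, if_true]
        calc ∑ f : S → S, μ f * Rfun μ (a + b) (f ∘ x)
            = ∑ f : S → S, μ f * ∑ y, rhofun μ a (f ∘ x) y * Rfun μ b y := by
              simp only [fun f => ih b (f ∘ x)]
          _ = ∑ f : S → S, ∑ y, μ f * rhofun μ a (f ∘ x) y * Rfun μ b y := by
              congr 1; ext f
              rw [Finset.mul_sum]
              congr 1; ext y; ring
          _ = ∑ y, (∑ f : S → S, μ f * rhofun μ a (f ∘ x) y) * Rfun μ b y := by
              rw [Finset.sum_comm]
              congr 1; ext y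
              rw [Finset.sum_mul]
      · simp [hx]

lemma Rfun_geom (hμ0 : ∀ f, 0 ≤ μ f) (hμ1 : ∑ f, μ f = 1)
    (T : ℕ) (δ : ℝ) (hδ1 : δ ≤ 1)
    (hbd : ∀ y : Fin m → S, Rfun μ T y ≤ 1 - δ) :
    ∀ (k : ℕ) (x : Fin m → S), Rfun μ (k * T) x ≤ (1 - δ) ^ k := by
  intro k
  induction k with
  | zero =>
      intro x
      rw [Nat.zero_mul, pow_zero]
      exact Rfun_le_one hμ0 hμ1 0 x
  | succ k ih =>
      intro x
      have hmul : (k + 1) * T = k * T + T := by ring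
      rw [hmul, Rfun_add (k * T) T x, pow_succ]
      calc ∑ y, rhofun μ (k * T) x y * Rfun μ T y
          ≤ ∑ y, rhofun μ (k * T) x y * (1 - δ) := by
            apply Finset.sum_le_sum
            intro y _
            exact mul_le_mul_of_nonneg_left (hbd y) (rhofun_nonneg hμ0 (k * T) x y)
        _ = Rfun μ (k * T) x * (1 - δ) := by
            rw [← Finset.sum_mul, rhofun_sum (k * T) x]
        _ ≤ (1 - δ) ^ k * (1 - δ) :=
            mul_le_mul_of_nonneg_right (ih x) (by linarith)

end Comb


section Cyl
variable {S : Type*} [Fintype S] [DecidableEq S] {m : ℕ}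

def extseq {S : Type*} (n : ℕ) (v : Fin n → S → S) : ℕ → S → S :=
  fun t => if h : t < n then v ⟨t, h⟩ else id

lemma comps_eq_of_agree {S : Type*} (f g : ℕ → S → S) :
    ∀ t : ℕ, (∀ u, u < t → f u = g u) → comps f t = comps g t := by
  intro t
  induction t with
  | zero => intro _; rfl
  | succ t ih =>
      intro h
      rw [comps, comps, ih (fun u hu => h u (by omega)), h t (by omega)]

lemma comps_succ_left {S : Type*} (v : ℕ → S → S) :
    ∀ t : ℕ, comps v (t + 1) = comps (fun u => v (u + 1)) t ∘ v 0 := by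
  intro t
  induction t with
  | zero => rfl
  | succ t ih =>
      rw [comps, ih]
      rfl

lemma extseq_shift (n : ℕ) (f : S → S) (w : Fin n → S → S) :
    (fun u => extseq (n + 1) (Fin.cons f w) (u + 1)) = extseq n w := by
  funext u
  unfold extseq
  by_cases h : u < n
  · rw [dif_pos (by omega : u + 1 < n + 1), dif_pos h]
    exact Fin.cons_succ (α := fun _ => S → S) f w ⟨u, h⟩
  · rw [dif_neg (by omega : ¬ (u + 1 < n + 1)), dif_neg h]

lemma cond_cons_iff (n : ℕ) (f : S → S) (w : Fin n → S → S) (x : Fin m → S) :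
    (∀ t ≤ n + 1, Function.Injective
        (fun a => comps (extseq (n + 1) (Fin.cons f w)) t (x a)))
      ↔ (Function.Injective x ∧
        ∀ t ≤ n, Function.Injective (fun a => comps (extseq n w) t ((f ∘ x) a))) := by
  have hkey : ∀ t : ℕ, (fun a => comps (extseq (n + 1) (Fin.cons f w)) (t + 1) (x a))
      = fun a => comps (extseq n w) t ((f ∘ x) a) := by
    intro t
    funext a
    rw [comps_succ_left, extseq_shift]
    have h0 : extseq (n + 1) (Fin.cons f w) 0 = f := by
      unfold extseq
      rw [dif_pos (by omega : 0 < n + 1)]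
      rfl
    simp [h0]
  constructor
  · intro H
    refine ⟨?_, ?_⟩
    · have := H 0 (by omega)
      simpa [comps] using this
    · intro t ht
      rw [← hkey t]
      exact H (t + 1) (by omega)
  · rintro ⟨hx, H⟩ t ht
    match t with
    | 0 => simpa [comps] using hx
    | t + 1 =>
        rw [hkey t]
        exact H t (by omega)

end Cyl

section Cyl2
variable {S : Type*} [Fintype S] [DecidableEq S] {m : ℕ}

lemma sum_prod_eq_Rfun (μ : (S → S) → ℝ) :
    ∀ (n : ℕ) (x : Fin m → S),
    (∑ v : Fin n → S → S,
      if (∀ t ≤ n, Function.Injective fun a => comps (extseq n v) t (x a))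
      then ∏ t, μ (v t) else 0) = Rfun μ n x := by
  intro n
  induction n with
  | zero =>
      intro x
      rw [Fintype.sum_unique]
      rw [Rfun]
      congr 1
      · simp only [Finset.univ_eq_empty, Finset.prod_empty, eq_iff_iff]
        constructor
        · intro H
          have := H 0 (le_refl 0)
          simpa [comps] using this
        · intro hx t ht
          interval_cases t
          simpa [comps] using hx
  | succ n ih =>
      intro x
      rw [← Equiv.sum_comp (Fin.consEquiv (fun _ : Fin (n + 1) => S → S))
        (fun v => if (∀ t ≤ n + 1, Function.Injective
          fun a => comps (extseq (n + 1) v) t (x a)) then ∏ t, μ (v t) else 0)]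
      rw [Fintype.sum_prod_type]
      have hterm : ∀ (f : S → S) (w : Fin n → S → S),
          (if (∀ t ≤ n + 1, Function.Injective
            fun a => comps (extseq (n + 1) ((Fin.consEquiv (fun _ : Fin (n + 1) => S → S)) (f, w))) t (x a))
          then ∏ t : Fin (n + 1), μ (((Fin.consEquiv (fun _ : Fin (n + 1) => S → S)) (f, w)) t) else 0)
          = if Function.Injective x then
              μ f * (if (∀ t ≤ n, Function.Injective
                fun a => comps (extseq n w) t ((f ∘ x) a))
                then ∏ t : Fin n, μ (w t) else 0)
            else 0 := by
        intro f w
        have hcons : (Fin.consEquiv (fun _ : Fin (n + 1) => S → S)) (f, w) = Fin.cons (α := fun _ : Fin (n + 1) => S → S) f w := rfl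
        rw [hcons]
        have hprod : ∏ t : Fin (n + 1), μ (Fin.cons (α := fun _ : Fin (n + 1) => S → S) f w t)
            = μ f * ∏ t : Fin n, μ (w t) := by
          rw [Fin.prod_univ_succ]
          simp
        rw [hprod]
        by_cases hx : Function.Injective x
        · by_cases hw : (∀ t ≤ n, Function.Injective
              fun a => comps (extseq n w) t ((f ∘ x) a))
          · rw [if_pos ((cond_cons_iff n f w x).mpr ⟨hx, hw⟩), if_pos hx, if_pos hw]
          · rw [if_neg, if_pos hx, if_neg hw, mul_zero]
            intro H
            exact hw ((cond_cons_iff n f w x).mp H).2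
        · rw [if_neg, if_neg hx]
          intro H
          exact hx ((cond_cons_iff n f w x).mp H).1
      rw [Finset.sum_congr rfl (fun f _ => Finset.sum_congr rfl (fun w _ => hterm f w))]
      rw [Rfun]
      by_cases hx : Function.Injective x
      · simp only [hx, if_true]
        congr 1; ext f
        rw [← Finset.mul_sum, ih (f ∘ x)]
      · simp [hx]

end Cyl2

/-- if the invariant distribution `π` of the irreducible stochastic matrix `P`
satisfies `π s > 1/m` for some state `s`, then for every grand coupling `μ ∈ L_P` the number
of coalescence classes is almost surely `< m`: a.s., among any `m` distinct initial states,
some two of the coupled trajectories coalesce. -/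
theorem coalescence_classes_lt_of_invariant_large
    {S : Type*} [Fintype S] [DecidableEq S] [Nonempty S]
    {Ω : Type*} [MeasurableSpace Ω] (Pr : Measure Ω) [IsProbabilityMeasure Pr]
    (P : Matrix S S ℝ)
    (hnn : ∀ i j, 0 ≤ P i j) (hrow : ∀ i, ∑ j, P i j = 1)
    (hirr : ∀ i j, ∃ n : ℕ, 0 < n ∧ 0 < (P ^ n) i j)
    (π : S → ℝ) (hπpos : ∀ i, 0 < π i) (hπsum : ∑ i, π i = 1)
    (hπinv : ∀ j, ∑ i, π i * P i j = π j)
    (m : ℕ) (hm : 0 < m) (s : S) (hs : 1 / (m : ℝ) < π s)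
    (μ : (S → S) → ℝ) (hμ : IsCoupling μ P)
    (F : ℕ → Ω → S → S)
    (hiid : ∀ (T : Finset ℕ) (g : ℕ → S → S),
      Pr {ω | ∀ t ∈ T, F t ω = g t} = ∏ t ∈ T, ENNReal.ofReal (μ (g t))) :
    ∀ᵐ ω ∂Pr, ∀ ι : Fin m → S, Function.Injective ι →
      ∃ a b : Fin m, a ≠ b ∧
        ∃ t : ℕ, comps (fun n => F n ω) t (ι a) = comps (fun n => F n ω) t (ι b) := by

  classical
  obtain ⟨hμ0, hμ1, hμP⟩ := hμ
  have hπs1 : π s ≤ 1 := by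
    rw [← hπsum]
    exact Finset.single_le_sum (fun i _ => le_of_lt (hπpos i)) (Finset.mem_univ s)
  have hm2 : 2 ≤ m := by
    rcases Nat.lt_or_ge m 2 with h | h
    · exfalso
      interval_cases m
      · norm_num at hs
        linarith
    · exact h
  have hms : 1 < (m : ℝ) * π s := by
    have hm0 : (0:ℝ) < m := by exact_mod_cast hm
    rw [div_lt_iff₀ hm0] at hs
    linarith
  choose tfun htfun using exists_good_time P hnn hrow hirr π hπpos hπsum hπinv m s hms
  set T : ℕ := Finset.univ.sup tfun with hT
  have hRT : ∀ y : Fin m → S, Rfun μ T y ≤ Dfun μ (tfun y) y :=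
    fun y => Rfun_le_Dfun hμ0 hμ1 T (tfun y) (Finset.le_sup (Finset.mem_univ y)) y
  have hDlt : ∀ y : Fin m → S, Dfun μ (tfun y) y < 1 :=
    fun y => Dfun_lt_one hμ0 hμ1 P hμP hm2 (tfun y) y s (htfun y)
  have hne : (Finset.univ : Finset (Fin m → S)).Nonempty := Finset.univ_nonempty
  set d : ℝ := Finset.univ.sup' hne (fun y => Rfun μ T y) with hd
  have hdlt : d < 1 := by
    rw [hd, Finset.sup'_lt_iff]
    intro y _
    exact lt_of_le_of_lt (hRT y) (hDlt y)
  have hd0 : 0 ≤ d := by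
    obtain ⟨y, hy⟩ := hne
    exact le_trans (Rfun_nonneg hμ0 T y) (Finset.le_sup' (fun y => Rfun μ T y) hy)
  set δ : ℝ := 1 - d with hδdef
  have hδpos : 0 < δ := by rw [hδdef]; linarith
  have hδle : δ ≤ 1 := by rw [hδdef]; linarith
  have hbd : ∀ y : Fin m → S, Rfun μ T y ≤ 1 - δ := by
    intro y
    have : Rfun μ T y ≤ d := Finset.le_sup' (fun y => Rfun μ T y) (Finset.mem_univ y)
    rw [hδdef]
    linarith
  have hgeom : ∀ (k : ℕ) (x : Fin m → S), Rfun μ (k * T) x ≤ (1 - δ) ^ k :=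
    Rfun_geom hμ0 hμ1 T δ hδle hbd
  -- measure-theoretic part
  rw [MeasureTheory.ae_iff]
  have hEn : ∀ (ι : Fin m → S) (n : ℕ),
      Pr {ω | ∀ t, Function.Injective fun a => comps (fun u => F u ω) t (ι a)}
        ≤ ENNReal.ofReal (Rfun μ n ι) := by
    intro ι n
    have hsub : {ω | ∀ t, Function.Injective fun a => comps (fun u => F u ω) t (ι a)}
        ⊆ ⋃ v : Fin n → S → S,
          (if (∀ t ≤ n, Function.Injective fun a => comps (extseq n v) t (ι a))
           then {ω | ∀ t ∈ Finset.range n, F t ω = extseq n v t} else ∅) := by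
      intro ω hω
      simp only [Set.mem_setOf_eq] at hω
      refine Set.mem_iUnion.mpr ⟨fun t : Fin n => F t ω, ?_⟩
      have hagree : ∀ t : ℕ, t ≤ n →
          comps (extseq n (fun t : Fin n => F t ω)) t = comps (fun u => F u ω) t := by
        intro t ht
        apply comps_eq_of_agree
        intro u hu
        unfold extseq
        rw [dif_pos (lt_of_lt_of_le hu ht)]
      have hcond : (∀ t ≤ n, Function.Injective
          fun a => comps (extseq n (fun t : Fin n => F t ω)) t (ι a)) := by
        intro t ht
        rw [hagree t ht]
        exact hω t
      rw [if_pos hcond]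
      intro t ht
      unfold extseq
      rw [dif_pos (Finset.mem_range.mp ht)]
    refine le_trans (measure_mono hsub) (le_trans (measure_iUnion_le _) ?_)
    rw [tsum_fintype]
    have hcyl : ∀ v : Fin n → S → S,
        Pr (if (∀ t ≤ n, Function.Injective fun a => comps (extseq n v) t (ι a))
            then {ω | ∀ t ∈ Finset.range n, F t ω = extseq n v t} else ∅)
        = ENNReal.ofReal (if (∀ t ≤ n, Function.Injective
            fun a => comps (extseq n v) t (ι a))
          then ∏ t : Fin n, μ (v t) else 0) := by
      intro v
      split
      · rw [hiid (Finset.range n) (extseq n v)]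
        rw [← Fin.prod_univ_eq_prod_range (fun t => ENNReal.ofReal (μ (extseq n v t))) n]
        have h2 : ∀ t : Fin n, extseq n v t.val = v t := by
          intro t
          unfold extseq
          rw [dif_pos t.isLt]
        rw [Finset.prod_congr rfl (fun t (_ : t ∈ Finset.univ) => by rw [h2 t])]
        rw [← ENNReal.ofReal_prod_of_nonneg]
        exact fun t _ => hμ0 (v t)
      · simp
    rw [Finset.sum_congr rfl (fun v _ => hcyl v)]
    rw [← ENNReal.ofReal_sum_of_nonneg]
    · rw [sum_prod_eq_Rfun μ n ι]
    · intro v _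
      split
      · exact Finset.prod_nonneg fun t _ => hμ0 (v t)
      · exact le_refl 0
  have hBad : ∀ ι : Fin m → S,
      Pr {ω | ∀ t, Function.Injective fun a => comps (fun u => F u ω) t (ι a)} = 0 := by
    intro ι
    have hk : ∀ k : ℕ,
        Pr {ω | ∀ t, Function.Injective fun a => comps (fun u => F u ω) t (ι a)}
          ≤ ENNReal.ofReal ((1 - δ) ^ k) :=
      fun k => le_trans (hEn ι (k * T)) (ENNReal.ofReal_le_ofReal (hgeom k ι))
    have htend : Filter.Tendsto (fun k : ℕ => ENNReal.ofReal ((1 - δ) ^ k))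
        Filter.atTop (nhds 0) := by
      have h1 : Filter.Tendsto (fun k : ℕ => (1 - δ) ^ k) Filter.atTop (nhds 0) :=
        tendsto_pow_atTop_nhds_zero_of_lt_one (by linarith) (by linarith)
      have h2 := (ENNReal.continuous_ofReal.tendsto 0).comp h1
      simpa [Function.comp_def] using h2
    exact le_antisymm (ge_of_tendsto' htend hk) zero_le
  refine le_antisymm ?_ zero_le
  have hsub2 : {ω | ¬ ∀ (ι : Fin m → S), Function.Injective ι → ∃ a b : Fin m, a ≠ b ∧
        ∃ t : ℕ, comps (fun u => F u ω) t (ι a) = comps (fun u => F u ω) t (ι b)}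
      ⊆ ⋃ ι : Fin m → S,
        {ω | ∀ t, Function.Injective fun a => comps (fun u => F u ω) t (ι a)} := by
    intro ω hω
    simp only [Set.mem_setOf_eq] at hω
    push_neg at hω
    obtain ⟨ι, hι, hno⟩ := hω
    refine Set.mem_iUnion.mpr ⟨ι, ?_⟩
    intro t a b hab
    by_contra hne
    exact hno a b hne t hab
  refine le_trans (measure_mono hsub2) (le_trans (measure_iUnion_le _) ?_)
  simp [hBad]
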